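/- Let σ be a sequence of channel actions over Σ and set y_k = pr[σ^k](ε) for k ∈ ℕ. Then: (a) y_k ⊑ y_{k+1} for all k; (b) if y_K = y_{K+1} for some K, then y_k = y_K for all k ≥ K, so the set I_σ = {x : y_k ⊑ x for all k} equals the upward closure of y_K; (c) if y_K ≠ y_{K+1} for every K, then I_σ is empty, i.e., for every word x there exists k with ¬(y_k ⊑ x). In particular I_σ is upward-closed and is either empty or has a single minimal element. -/

import Mathlib

open List
/-- `wpow u k` is the word `u` concatenated `k` times. -/
def wpow {β : Type*} (u : List β) (k : ℕ) : List β := (List.replicate k u).flatten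

/-- Auxiliary residual operation, working on reversed words. -/
def resAux {α : Type*} [DecidableEq α] : List α → List α → List α
  | xr, [] => xr
  | [], _ :: _ => []
  | a :: xr, b :: vr => if a = b then resAux xr vr else resAux (a :: xr) vr
termination_by xr vr => vr.length

/-- The residual `x / v`: the prefix of `x` obtained by removing from `x`
its longest suffix that is a subword of `v`. -/
def res {α : Type*} [DecidableEq α] (x v : List α) : List α :=
  (resAux x.reverse v.reverse).reverse

inductive Act (α : Type*) where
  | write : List α → Act α
  | read : List α → Act α

/-- written part -/
def wri {α : Type*} : List (Act α) → List α
  | [] => []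
  | Act.write w :: σ => w ++ wri σ
  | Act.read _ :: σ => wri σ

/-- read part -/
def rea {α : Type*} : List (Act α) → List α
  | [] => []
  | Act.write _ :: σ => rea σ
  | Act.read w :: σ => w ++ rea σ

/-- `pr σ x` : minimal `σ`-predecessor of `x` (processing `σ` right-to-left). -/
def pr {α : Type*} [DecidableEq α] : List (Act α) → List α → List α
  | [], x => x
  | Act.write v :: σ, x => res (pr σ x) v
  | Act.read u :: σ, x => u ++ pr σ x

/-- lossy step for a single channel action -/
def stepAct {α : Type*} : Act α → List α → List α → Prop
  | Act.write w, x, y => y <+ x ++ w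
  | Act.read w, x, y => w ++ y <+ x

/-- lossy steps along a sequence of channel actions -/
def steps {α : Type*} : List (Act α) → List α → List α → Prop
  | [], x, y => x = y
  | θ :: σ, x, y => ∃ z, stepAct θ x z ∧ steps σ z y

/-- `w` is a fractional power of `u` -/
def FracPow {α : Type*} (u w : List α) : Prop := ∃ k : ℕ, w <+: wpow u k

/-- `x ⊖ u` : remainder of `x` after reading the leftmost embedding of `u`. -/
def ominus {α : Type*} [DecidableEq α] : List α → List α → List α
  | x, [] => x
  | [], _ :: _ => []
  | a :: x, b :: u => if a = b then ominus x u else ominus x (b :: u)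

/-- `σ` is increasing -/
def Increasing {α : Type*} (σ : List (Act α)) : Prop :=
  0 < (wri σ).length ∧
    wpow (rea σ) (wri σ).length <+ wpow (wri σ) ((wri σ).length - 1)


lemma resAux_cons_sublist {α : Type*} [DecidableEq α] :
    ∀ (vr xr : List α) (a : α), resAux xr vr <+ resAux (a :: xr) vr := by
  intro vr
  induction vr with
  | nil => intro xr a; simp [resAux]
  | cons b vr' ih =>
    have Q : ∀ (xr : List α) (c : α), resAux xr (c :: vr') <+ resAux xr vr' := by
      intro xr c
      cases xr with
      | nil => cases vr' <;> simp [resAux]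
      | cons a xr' =>
        by_cases h : a = c
        · simp only [resAux, if_pos h]
          exact ih xr' a
        · simp only [resAux, if_neg h]
          exact Sublist.refl _
    intro xr a
    by_cases h : a = b
    · simp only [resAux, if_pos h]
      exact Q xr b
    · simp only [resAux, if_neg h]
      exact (Q xr b).trans (ih xr a)

lemma resAux_sublist_tail {α : Type*} [DecidableEq α] (xr : List α) (b : α) (vr : List α) :
    resAux xr (b :: vr) <+ resAux xr vr := by
  cases xr with
  | nil => cases vr <;> simp [resAux]
  | cons a xr' =>
    by_cases h : a = b
    · simp only [resAux, if_pos h]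
      exact resAux_cons_sublist vr xr' a
    · simp only [resAux, if_neg h]
      exact Sublist.refl _

lemma resAux_mono {α : Type*} [DecidableEq α] :
    ∀ (vr xr yr : List α), xr <+ yr → resAux xr vr <+ resAux yr vr := by
  intro vr
  induction vr with
  | nil => intro xr yr h; simpa [resAux] using h
  | cons b vr' ih =>
    intro xr yr h
    induction h with
    | slnil => exact Sublist.refl _
    | cons c h ihh =>
      rename_i l₁ l₂
      by_cases hc : c = b
      · simp only [resAux, if_pos hc]
        exact (resAux_sublist_tail l₁ b vr').trans (ih l₁ l₂ h)
      · simp only [resAux, if_neg hc]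
        exact (resAux_sublist_tail l₁ b vr').trans (ih l₁ (c :: l₂) (h.cons c))
    | cons_cons c h ihh =>
      rename_i l₁ l₂
      by_cases hc : c = b
      · simp only [resAux, if_pos hc]
        exact ih l₁ l₂ h
      · simp only [resAux, if_neg hc]
        exact ih (c :: l₁) (c :: l₂) (h.cons₂ c)

lemma res_mono {α : Type*} [DecidableEq α] {x y : List α} (v : List α) (h : x <+ y) :
    res x v <+ res y v :=
  (resAux_mono v.reverse x.reverse y.reverse h.reverse).reverse

lemma pr_mono {α : Type*} [DecidableEq α] (σ : List (Act α)) {x y : List α} (h : x <+ y) :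
    pr σ x <+ pr σ y := by
  induction σ with
  | nil => exact h
  | cons θ σ ih =>
    cases θ with
    | write v => exact res_mono v ih
    | read u => exact (Sublist.refl u).append ih

lemma pr_append {α : Type*} [DecidableEq α] (σ₁ σ₂ : List (Act α)) (x : List α) :
    pr (σ₁ ++ σ₂) x = pr σ₁ (pr σ₂ x) := by
  induction σ₁ with
  | nil => rfl
  | cons θ σ ih => cases θ <;> simp [pr, ih]

lemma wpow_succ {β : Type*} (u : List β) (k : ℕ) : wpow u (k + 1) = u ++ wpow u k := by
  simp [wpow, List.replicate_succ]

/-- the sequence `y_k = pr[σ^k](ε)` is increasing for `⊑`; if it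
stabilises at `K` then it is constant from `K` on and `I_σ` is the upward closure
of `y_K`; otherwise `I_σ` is empty. -/
theorem Isigma_characterisation {α : Type*} [DecidableEq α]
    (σ : List (Act α)) :
    (∀ k : ℕ, pr (wpow σ k) ([] : List α) <+ pr (wpow σ (k + 1)) []) ∧
    (∀ K : ℕ, pr (wpow σ K) ([] : List α) = pr (wpow σ (K + 1)) [] →
      (∀ k : ℕ, K ≤ k → pr (wpow σ k) ([] : List α) = pr (wpow σ K) []) ∧
      {x : List α | ∀ k : ℕ, pr (wpow σ k) [] <+ x} =
        {x : List α | pr (wpow σ K) [] <+ x}) ∧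
    ((∀ K : ℕ, pr (wpow σ K) ([] : List α) ≠ pr (wpow σ (K + 1)) []) →
      ∀ x : List α, ∃ k : ℕ, ¬ pr (wpow σ k) [] <+ x) := by
  set y : ℕ → List α := fun k => pr (wpow σ k) ([] : List α) with hy
  have hstep : ∀ k, y (k + 1) = pr σ (y k) := by
    intro k
    simp only [hy, wpow_succ, pr_append]
  have hmono : ∀ k, y k <+ y (k + 1) := by
    intro k
    induction k with
    | zero => exact nil_sublist _
    | succ n ih =>
      rw [hstep n, hstep (n + 1)]
      exact pr_mono σ ih
  have hchain : ∀ i j, i ≤ j → y i <+ y j := by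
    intro i j hij
    induction j, hij using Nat.le_induction with
    | base => exact Sublist.refl _
    | succ n hn ih => exact ih.trans (hmono n)
  refine ⟨hmono, ?_, ?_⟩
  · intro K hK
    have hconst : ∀ k, K ≤ k → y k = y K := by
      intro k hk
      induction k, hk using Nat.le_induction with
      | base => rfl
      | succ n hn ih =>
        rw [hstep n, ih, ← hstep K]
        exact (hK.symm : y (K + 1) = y K)
    refine ⟨hconst, ?_⟩
    ext x
    simp only [Set.mem_setOf_eq]
    constructor
    · intro h; exact h K
    · intro h k
      rcases le_or_gt k K with hk | hk
      · exact (hchain k K hk).trans h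
      · rw [show pr (wpow σ k) ([] : List α) = y k from rfl, hconst k hk.le]
        exact h
  · intro h x
    have hlen : ∀ k, k ≤ (y k).length := by
      intro k
      induction k with
      | zero => exact Nat.zero_le _
      | succ n ih =>
        have hs := hmono n
        have hne := h n
        have hlt : (y n).length < (y (n + 1)).length :=
          lt_of_le_of_ne hs.length_le (fun he => hne (hs.eq_of_length he))
        omega
    refine ⟨x.length + 1, fun hsub => ?_⟩
    have hsub' : y (x.length + 1) <+ x := hsub
    have h1 := hsub'.length_le
    have h2 := hlen (x.length + 1)
    omega
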